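/- Let R and S be rings. The functor Ψ from Mod(R^op ⊗_Z S) (the category of R-S-bimodules) to the category B(Mod R, Mod S) of right exact direct-limit-preserving functors Mod R → Mod S, given on objects by B ↦ (− ⊗_R B), is an equivalence of categories. -/

import Mathlib

open CategoryTheory CategoryTheory.Limits MulOpposite

universe u

section Preamble

variable (k : Type*) [CommRing k] (R : Type u) [Ring R] [Algebra k R]
variable (A : Type*) [Category.{u} A] [Preadditive A] [CategoryTheory.Linear k A]

/-- A left `R`-module in the `k`-linear category `A`: an object together with a
ring homomorphism `ρ : R → End 𝓕` which is `k`-linear, i.e. a `k`-algebra homomorphism. -/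
structure LMod where
  X : A
  ρ : R →+* End X
  algebraMap_smul' : ∀ a : k, ρ (algebraMap k R a) = a • (𝟙 X)

variable {k R A}

/-- the `k`-module structure on right `R`-modules obtained by restriction of scalars -/
noncomputable instance (M : ModuleCat.{u} Rᵐᵒᵖ) : Module k M :=
  RestrictScalars.module k Rᵐᵒᵖ M

instance (M : ModuleCat.{u} Rᵐᵒᵖ) : IsScalarTower k Rᵐᵒᵖ M :=
  RestrictScalars.isScalarTower k Rᵐᵒᵖ M

/-- The `k`-linear structure on the category of right `R`-modules, `a • m = m · γ(a)`. -/
noncomputable instance : CategoryTheory.Linear k (ModuleCat.{u} Rᵐᵒᵖ) where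
  homModule _ _ := ModuleCat.Hom.instModule
  smul_comp := by
    intros
    ext
    simp

/-- `Hom_A(𝓕, N)` is a right `R`-module via `α · r := ρ(r) ≫ α`. -/
instance homRMod (F : LMod k R A) (N : A) : Module Rᵐᵒᵖ (F.X ⟶ N) where
  smul r α := F.ρ r.unop ≫ α
  one_smul α := by show F.ρ _ ≫ α = α; simp
  mul_smul r s α := by
    show F.ρ _ ≫ α = F.ρ _ ≫ F.ρ _ ≫ α
    rw [unop_mul, map_mul, End.mul_def, Category.assoc]
  smul_zero r := by show _ ≫ (0 : F.X ⟶ N) = 0; simp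
  smul_add r α β := by show _ ≫ (α + β) = _ ≫ α + _ ≫ β; simp
  add_smul r s α := by
    show F.ρ _ ≫ α = F.ρ _ ≫ α + F.ρ _ ≫ α
    rw [MulOpposite.unop_add, map_add]; exact Preadditive.add_comp _ _ _ _ _ _
  zero_smul α := by show F.ρ _ ≫ α = 0; rw [MulOpposite.unop_zero, map_zero]; exact Limits.zero_comp

lemma homRMod_smul_def (F : LMod k R A) {N : A} (r : Rᵐᵒᵖ) (α : F.X ⟶ N) :
    r • α = F.ρ r.unop ≫ α := rfl

/-- The functor `Hom_A(𝓕, -) : A ⥤ Mod R`. -/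
noncomputable def homFunctor (F : LMod k R A) : A ⥤ ModuleCat.{u} Rᵐᵒᵖ where
  obj N := ModuleCat.of Rᵐᵒᵖ (F.X ⟶ N)
  map {N N'} f := ModuleCat.ofHom
    { toFun := fun α => α ≫ f
      map_add' := fun α β => Preadditive.add_comp _ _ _ _ _ _
      map_smul' := fun r α => by
        show (F.ρ r.unop ≫ α) ≫ f = F.ρ r.unop ≫ (α ≫ f)
        rw [Category.assoc] }
  map_id N := by
    apply ModuleCat.hom_ext; apply LinearMap.ext; intro α; exact Category.comp_id α
  map_comp f g := by
    apply ModuleCat.hom_ext; apply LinearMap.ext; intro α; exact (Category.assoc _ _ _).symm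

/-- `R` as a right module over itself. -/
noncomputable abbrev RR : ModuleCat.{u} Rᵐᵒᵖ := ModuleCat.of Rᵐᵒᵖ Rᵐᵒᵖ

variable (R) in
/-- left multiplication `μ_x` by `x` on `R`, a right `R`-module map -/
def mulMap (x : R) : (RR : ModuleCat.{u} Rᵐᵒᵖ) ⟶ RR := ModuleCat.ofHom {
  toFun r := op (x * r.unop)
  map_add' r s := by
    apply unop_injective
    show x * (r + s).unop = _
    rw [show (r + s).unop = r.unop + s.unop from rfl, mul_add]; rfl
  map_smul' s t := by
    apply unop_injective
    show x * (s • t).unop = ((s • op (x * t.unop)).unop)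
    rw [show (s • t).unop = t.unop * s.unop from rfl,
      show (s • op (x * t.unop)).unop = (x * t.unop) * s.unop from rfl, mul_assoc]
  }

/-- Morphisms `𝓕 → 𝓖` of left `R`-modules in `A` induce natural transformations
`Hom_A(𝓖,-) ⟶ Hom_A(𝓕,-)`. -/
noncomputable def homPre {F G : LMod k R A} (φ : F.X ⟶ G.X)
    (h : ∀ r : R, F.ρ r ≫ φ = φ ≫ G.ρ r) : homFunctor G ⟶ homFunctor F where
  app N := ModuleCat.ofHom
    { toFun := fun α => φ ≫ α
      map_add' := fun α β => Preadditive.comp_add _ _ _ _ _ _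
      map_smul' := fun r α => by
        show φ ≫ G.ρ r.unop ≫ α = F.ρ r.unop ≫ φ ≫ α
        rw [← Category.assoc, ← h, Category.assoc] }
  naturality N N' f := by
    apply ModuleCat.hom_ext; apply LinearMap.ext; intro α; exact (Category.assoc _ _ _).symm

/-- `M ⊗ φ` : the natural transformation `- ⊗_R 𝓕 ⟶ - ⊗_R 𝓖` induced by `φ : 𝓕 ⟶ 𝓖`,
obtained as the conjugate (mate) of `homPre φ`. -/
noncomputable def tensorMap {F G : LMod k R A} {TF TG : ModuleCat.{u} Rᵐᵒᵖ ⥤ A}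
    (adjF : TF ⊣ homFunctor F) (adjG : TG ⊣ homFunctor G) (φ : F.X ⟶ G.X)
    (h : ∀ r : R, F.ρ r ≫ φ = φ ≫ G.ρ r) : TF ⟶ TG :=
  (conjugateEquiv adjG adjF).symm (homPre φ h)

/-- The canonical map `ξ_𝓕 : 𝓕 ⟶ R ⊗_R 𝓕`. -/
noncomputable def xi {F : LMod k R A} {TF : ModuleCat.{u} Rᵐᵒᵖ ⥤ A}
    (adjF : TF ⊣ homFunctor F) : F.X ⟶ TF.obj RR :=
  (adjF.unit.app RR) (1 : Rᵐᵒᵖ)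

end Preamble

section Bimod
open TensorProduct

variable (R : Type u) [Ring R] (S : Type u) [Ring S]

/-- the inclusion `Sᵐᵒᵖ → (Rᵐᵒᵖ ⊗[ℤ] S)ᵐᵒᵖ` -/
noncomputable def inclS : Sᵐᵒᵖ →+* (Rᵐᵒᵖ ⊗[ℤ] S)ᵐᵒᵖ :=
  RingHom.op (Algebra.TensorProduct.includeRight.toRingHom)

/-- the inclusion `R → (Rᵐᵒᵖ ⊗[ℤ] S)ᵐᵒᵖ` -/
noncomputable def inclR : R →+* (Rᵐᵒᵖ ⊗[ℤ] S)ᵐᵒᵖ :=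
  (RingHom.op (Algebra.TensorProduct.includeLeftRingHom)).comp (RingEquiv.opOp R).toRingHom

lemma inclS_comm_inclR (s : Sᵐᵒᵖ) (x : R) :
    inclS R S s * inclR R S x = inclR R S x * inclS R S s := by
  apply unop_injective
  show ((op x : Rᵐᵒᵖ) ⊗ₜ[ℤ] (1 : S)) * ((1 : Rᵐᵒᵖ) ⊗ₜ[ℤ] s.unop)
    = ((1 : Rᵐᵒᵖ) ⊗ₜ[ℤ] s.unop) * ((op x : Rᵐᵒᵖ) ⊗ₜ[ℤ] (1 : S))
  rw [Algebra.TensorProduct.tmul_mul_tmul, Algebra.TensorProduct.tmul_mul_tmul,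
    one_mul, mul_one, one_mul, mul_one]

variable {R S}

/-- An `R`-`S`-bimodule restricts to a right `S`-module. -/
noncomputable instance bimodModS (B : ModuleCat.{u} (Rᵐᵒᵖ ⊗[ℤ] S)ᵐᵒᵖ) : Module Sᵐᵒᵖ B :=
  Module.compHom B (inclS R S)

/-- The left `R`-action on an `R`-`S`-bimodule. -/
noncomputable instance bimodModR (B : ModuleCat.{u} (Rᵐᵒᵖ ⊗[ℤ] S)ᵐᵒᵖ) : Module R B :=
  Module.compHom B (inclR R S)

instance bimodSMulComm (B : ModuleCat.{u} (Rᵐᵒᵖ ⊗[ℤ] S)ᵐᵒᵖ) :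
    SMulCommClass R Sᵐᵒᵖ B where
  smul_comm x s b := by
    show inclR R S x • inclS R S s • b = inclS R S s • inclR R S x • b
    rw [smul_smul, smul_smul, inclS_comm_inclR]

/-- An `R`-`S`-bimodule, i.e. a right module over `Rᵒᵖ ⊗_ℤ S`, is a left `R`-module
in the category of right `S`-modules. -/
noncomputable def bimodToLMod (B : ModuleCat.{u} (Rᵐᵒᵖ ⊗[ℤ] S)ᵐᵒᵖ) :
    LMod ℤ R (ModuleCat.{u} Sᵐᵒᵖ) where
  X := ModuleCat.of Sᵐᵒᵖ B
  ρ :=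
    { toFun := fun x => ModuleCat.ofHom (Module.toModuleEnd (R := Sᵐᵒᵖ) (M := B) (S := R) x)
      map_one' := ModuleCat.hom_ext
        (by exact map_one (Module.toModuleEnd (R := Sᵐᵒᵖ) (M := B) (S := R)))
      map_mul' := fun x y => ModuleCat.hom_ext (by
        exact map_mul (Module.toModuleEnd (R := Sᵐᵒᵖ) (M := B) (S := R)) x y)
      map_zero' := ModuleCat.hom_ext
        (by exact map_zero (Module.toModuleEnd (R := Sᵐᵒᵖ) (M := B) (S := R)))
      map_add' := fun x y => ModuleCat.hom_ext (by
        exact map_add (Module.toModuleEnd (R := Sᵐᵒᵖ) (M := B) (S := R)) x y) }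
  algebraMap_smul' a := ModuleCat.hom_ext <| LinearMap.ext fun (b : (B : Type u)) => by
    show algebraMap ℤ R a • b = (a • 𝟙 (ModuleCat.of Sᵐᵒᵖ B)).hom b
    rw [ModuleCat.hom_smul, LinearMap.smul_apply, ← algebraMap_smul (A := Sᵐᵒᵖ) (r := a)
        (m := ModuleCat.Hom.hom (𝟙 (ModuleCat.of Sᵐᵒᵖ B)) b)]
    show inclR R S (algebraMap ℤ R a) • b = inclS R S (algebraMap ℤ Sᵐᵒᵖ a) • b
    rw [show algebraMap ℤ R a = ((a : R)) from by simp,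
      show algebraMap ℤ Sᵐᵒᵖ a = ((a : Sᵐᵒᵖ)) from by simp,
      map_intCast, map_intCast]


/-- The morphism of left `R`-modules in `Mod S` induced by a morphism of bimodules. -/
noncomputable def bimodMap {B B' : ModuleCat.{u} (Rᵐᵒᵖ ⊗[ℤ] S)ᵐᵒᵖ} (f : B ⟶ B') :
    (bimodToLMod B).X ⟶ (bimodToLMod B').X := ModuleCat.ofHom
  { toFun := fun (b : (B : Type u)) => f.hom b
    map_add' := map_add f.hom
    map_smul' := fun s b => by exact f.hom.map_smul (inclS R S s) b }

lemma bimodMap_equivariant {B B' : ModuleCat.{u} (Rᵐᵒᵖ ⊗[ℤ] S)ᵐᵒᵖ} (f : B ⟶ B') (x : R) :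
    (bimodToLMod B).ρ x ≫ bimodMap f = bimodMap f ≫ (bimodToLMod B').ρ x :=
  ModuleCat.hom_ext <| LinearMap.ext fun (b : (B : Type u)) => by
    show f (inclR R S x • b) = inclR R S x • f b
    exact f.hom.map_smul _ b

variable (R S) in
/-- The defining property of the category `B(Mod R, Mod S)`: right exact functors
commuting with direct sums (equivalently, with direct limits). -/
def WattsObjZ (T : ModuleCat.{u} Rᵐᵒᵖ ⥤ ModuleCat.{u} Sᵐᵒᵖ) : Prop :=
  T.Additive ∧ Nonempty (PreservesFiniteColimits T) ∧
    ∀ ι : Type u, Nonempty (PreservesColimitsOfShape (Discrete ι) T)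

end Bimod

section Aux
open TensorProduct

/-! ### Lemmas about natural transformations between hom functors -/

section HomPreAux

variable {k : Type*} [CommRing k] {R : Type u} [Ring R] [Algebra k R] {A : Type*}
  [Category.{u} A] [Preadditive A] [CategoryTheory.Linear k A]

lemma natTrans_app_eq {F G : LMod k R A} (τ : homFunctor G ⟶ homFunctor F)
    (N : A) (α : G.X ⟶ N) : (τ.app N) α = (τ.app G.X) (𝟙 G.X) ≫ α := by
  have h := ConcreteCategory.congr_hom (τ.naturality α) (𝟙 G.X)
  have h1 : ((homFunctor G).map α ≫ τ.app N) (𝟙 G.X) = (τ.app N) (𝟙 G.X ≫ α) := rfl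
  have h2 : (τ.app G.X ≫ (homFunctor F).map α) (𝟙 G.X) = (τ.app G.X) (𝟙 G.X) ≫ α := rfl
  rw [h1, h2, Category.id_comp] at h
  exact h

lemma natTrans_equivariant {F G : LMod k R A} (τ : homFunctor G ⟶ homFunctor F) (r : R) :
    F.ρ r ≫ (τ.app G.X) (𝟙 G.X) = (τ.app G.X) (𝟙 G.X) ≫ G.ρ r := by
  have h1 : (τ.app G.X) (G.ρ r ≫ 𝟙 G.X) = F.ρ r ≫ (τ.app G.X) (𝟙 G.X) :=
    (τ.app G.X).hom.map_smul (op r) (𝟙 G.X)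
  rw [Category.comp_id] at h1
  have h2 := natTrans_app_eq τ G.X (G.ρ r)
  rw [h1] at h2
  exact h2

lemma natTrans_eq_homPre {F G : LMod k R A} (τ : homFunctor G ⟶ homFunctor F)
    {φ : F.X ⟶ G.X} (hφ : φ = (τ.app G.X) (𝟙 G.X))
    (h : ∀ r : R, F.ρ r ≫ φ = φ ≫ G.ρ r) : τ = homPre φ h := by
  apply NatTrans.ext
  funext N
  apply ModuleCat.hom_ext
  apply LinearMap.ext
  intro α
  show (τ.app N) α = ((homPre φ h).app N) α
  rw [natTrans_app_eq τ N α]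
  show (τ.app G.X) (𝟙 G.X) ≫ α = φ ≫ α
  rw [hφ]

lemma homPre_inj {F G : LMod k R A} {φ φ' : F.X ⟶ G.X}
    {h : ∀ r : R, F.ρ r ≫ φ = φ ≫ G.ρ r} {h' : ∀ r : R, F.ρ r ≫ φ' = φ' ≫ G.ρ r}
    (heq : homPre φ h = homPre φ' h') : φ = φ' := by
  have h1 := congrArg (fun τ => (τ.app G.X).hom (𝟙 G.X)) heq
  have h2 : φ ≫ 𝟙 G.X = φ' ≫ 𝟙 G.X := h1
  rw [Category.comp_id, Category.comp_id] at h2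
  exact h2

end HomPreAux

/-! ### Auxiliary constructions for essential surjectivity -/

section EssSurjAux

variable {R : Type u} [Ring R] {S : Type u} [Ring S]

lemma mulMap_one' : mulMap R 1 = 𝟙 (RR : ModuleCat.{u} Rᵐᵒᵖ) := by
  apply ModuleCat.hom_ext; apply LinearMap.ext; intro r; apply unop_injective
  show (1 : R) * r.unop = r.unop
  rw [one_mul]

lemma mulMap_mul' (x y : R) :
    mulMap R (x * y) = (mulMap R y ≫ mulMap R x : (RR : ModuleCat.{u} Rᵐᵒᵖ) ⟶ RR) := by
  apply ModuleCat.hom_ext; apply LinearMap.ext; intro r; apply unop_injective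
  show x * y * r.unop = x * (y * r.unop)
  rw [mul_assoc]

lemma mulMap_add' (x y : R) :
    mulMap R (x + y) = (mulMap R x + mulMap R y : (RR : ModuleCat.{u} Rᵐᵒᵖ) ⟶ RR) := by
  apply ModuleCat.hom_ext; apply LinearMap.ext; intro r; apply unop_injective
  show (x + y) * r.unop = ((mulMap R x + mulMap R y) r).unop
  rw [show (mulMap R x + mulMap R y) r = mulMap R x r + mulMap R y r from rfl]
  show (x + y) * r.unop = x * r.unop + y * r.unop
  rw [add_mul]

lemma mulMap_zero' : mulMap R (0 : R) = (0 : (RR : ModuleCat.{u} Rᵐᵒᵖ) ⟶ RR) := by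
  apply ModuleCat.hom_ext; apply LinearMap.ext; intro r; apply unop_injective
  show (0 : R) * r.unop = (0 : Rᵐᵒᵖ).unop
  rw [zero_mul]; rfl

variable (T : ModuleCat.{u} Rᵐᵒᵖ ⥤ ModuleCat.{u} Sᵐᵒᵖ) [T.Additive]

/-- The left action of `R` on `T(R)` obtained by functoriality from left multiplication. -/
noncomputable def wattsR : R →+* Module.End ℤ (T.obj RR) where
  toFun x := (T.map (mulMap R x)).hom.toAddMonoidHom.toIntLinearMap
  map_one' := by
    apply LinearMap.ext; intro m
    show T.map (mulMap R 1) m = m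
    rw [mulMap_one', T.map_id]
    rfl
  map_mul' x y := by
    apply LinearMap.ext; intro m
    show T.map (mulMap R (x * y)) m = T.map (mulMap R x) (T.map (mulMap R y) m)
    rw [mulMap_mul', T.map_comp]
    rfl
  map_zero' := by
    apply LinearMap.ext; intro m
    show T.map (mulMap R 0) m = 0
    rw [mulMap_zero', T.map_zero]
    rfl
  map_add' x y := by
    apply LinearMap.ext; intro m
    show T.map (mulMap R (x + y)) m = T.map (mulMap R x) m + T.map (mulMap R y) m
    rw [mulMap_add', T.map_add]
    rfl

lemma watts_commute (x : R) (s : Sᵐᵒᵖ) :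
    Commute (wattsR T x) (Module.toModuleEnd ℤ (T.obj RR) s) := by
  apply LinearMap.ext; intro m
  show T.map (mulMap R x) (s • m) = s • (T.map (mulMap R x) m)
  exact (T.map (mulMap R x)).hom.map_smul s m

/-- The lift of the two actions to the tensor product. -/
noncomputable def wattsLift : (Rᵐᵒᵖᵐᵒᵖ ⊗[ℤ] Sᵐᵒᵖ) →ₐ[ℤ] Module.End ℤ (T.obj RR) :=
  Algebra.TensorProduct.lift
    (((wattsR T).comp (RingEquiv.opOp R).symm.toRingHom).toIntAlgHom)
    ((Module.toModuleEnd ℤ (T.obj RR) : Sᵐᵒᵖ →+* Module.End ℤ (T.obj RR)).toIntAlgHom)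
    (fun _ s => watts_commute T _ s)

/-- The ring morphism giving the bimodule structure on `T(R)`. -/
noncomputable def wattsRho : (Rᵐᵒᵖ ⊗[ℤ] S)ᵐᵒᵖ →+* Module.End ℤ (T.obj RR) :=
  (wattsLift T).toRingHom.comp
    ((Algebra.TensorProduct.opAlgEquiv ℤ ℤ Rᵐᵒᵖ S).symm.toRingEquiv.toRingHom)

lemma wattsRho_apply (z : (Rᵐᵒᵖ ⊗[ℤ] S)ᵐᵒᵖ) :
    wattsRho T z = wattsLift T ((Algebra.TensorProduct.opAlgEquiv ℤ ℤ Rᵐᵒᵖ S).symm z) := rfl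

lemma wattsRho_inclS (s : Sᵐᵒᵖ) :
    wattsRho T (inclS R S s) = Module.toModuleEnd ℤ (T.obj RR) s := by
  have h : (Algebra.TensorProduct.opAlgEquiv ℤ ℤ Rᵐᵒᵖ S).symm (inclS R S s)
      = (1 : Rᵐᵒᵖᵐᵒᵖ) ⊗ₜ[ℤ] s := by
    apply (Algebra.TensorProduct.opAlgEquiv ℤ ℤ Rᵐᵒᵖ S).injective
    rw [AlgEquiv.apply_symm_apply, Algebra.TensorProduct.opAlgEquiv_tmul]
    rfl
  rw [wattsRho_apply, h]
  unfold wattsLift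
  erw [Algebra.TensorProduct.lift_tmul]
  erw [map_one, one_mul]
  rfl

lemma wattsRho_inclR (x : R) : wattsRho T (inclR R S x) = wattsR T x := by
  have h : (Algebra.TensorProduct.opAlgEquiv ℤ ℤ Rᵐᵒᵖ S).symm (inclR R S x)
      = (op (op x) : Rᵐᵒᵖᵐᵒᵖ) ⊗ₜ[ℤ] (1 : Sᵐᵒᵖ) := by
    apply (Algebra.TensorProduct.opAlgEquiv ℤ ℤ Rᵐᵒᵖ S).injective
    rw [AlgEquiv.apply_symm_apply, Algebra.TensorProduct.opAlgEquiv_tmul]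
    rfl
  rw [wattsRho_apply, h]
  unfold wattsLift
  erw [Algebra.TensorProduct.lift_tmul]
  erw [map_one, mul_one]
  rfl

/-- `T(R)` as an `R`-`S`-bimodule. -/
noncomputable def wattsBimod : ModuleCat.{u} (Rᵐᵒᵖ ⊗[ℤ] S)ᵐᵒᵖ :=
  letI : Module (Rᵐᵒᵖ ⊗[ℤ] S)ᵐᵒᵖ (T.obj RR) := Module.compHom (T.obj RR) (wattsRho T)
  ModuleCat.of _ (T.obj RR)

lemma wattsBimod_smul_def (z : (Rᵐᵒᵖ ⊗[ℤ] S)ᵐᵒᵖ) (m : wattsBimod T) :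
    z • m = wattsRho T z (show (T.obj RR : Type u) from m) := rfl

/-- The identity, as an isomorphism of right `S`-modules between the underlying
`S`-module of the bimodule `wattsBimod T` and `T(R)`. -/
noncomputable def wattsIsoX : (bimodToLMod (wattsBimod T)).X ≅ T.obj RR :=
  LinearEquiv.toModuleIso
    { toFun := fun b => (show (T.obj RR : Type u) from b)
      invFun := fun m => (show ((bimodToLMod (wattsBimod T)).X : Type u) from m)
      map_add' := fun _ _ => rfl
      map_smul' := fun s b => by
        show wattsRho T (inclS R S s) b = s • (show (T.obj RR : Type u) from b)
        rw [wattsRho_inclS]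
        rfl
      left_inv := fun _ => rfl
      right_inv := fun _ => rfl }

lemma wattsRho_comm (x : R) :
    (bimodToLMod (wattsBimod T)).ρ x ≫ (wattsIsoX T).hom
      = (wattsIsoX T).hom ≫ T.map (mulMap R x) := by
  apply ModuleCat.hom_ext; apply LinearMap.ext; intro b
  show wattsRho T (inclR R S x) b = T.map (mulMap R x) b
  rw [wattsRho_inclR]
  rfl

/-- The morphism `R ⟶ X` of right `R`-modules determined by a point of `X`. -/
noncomputable def ptMap (X : ModuleCat.{u} Rᵐᵒᵖ) (x : X) :
    (RR : ModuleCat.{u} Rᵐᵒᵖ) ⟶ X := ModuleCat.ofHom {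
  toFun r := r • x
  map_add' a b := add_smul (show Rᵐᵒᵖ from a) (show Rᵐᵒᵖ from b) x
  map_smul' a b := mul_smul a (show Rᵐᵒᵖ from b) x }

lemma isSeparating_RR :
    ObjectProperty.IsSeparating (ObjectProperty.singleton (RR : ModuleCat.{u} Rᵐᵒᵖ)) := by
  intro X Y f g h
  apply ModuleCat.hom_ext; apply LinearMap.ext; intro x
  have h1 := ConcreteCategory.congr_hom
    (h RR ((ObjectProperty.singleton_iff _ _).2 rfl) (ptMap X x)) (1 : Rᵐᵒᵖ)
  have h2 : (ptMap X x ≫ f) (1 : Rᵐᵒᵖ) = f x := by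
    show f ((1 : Rᵐᵒᵖ) • x) = f x
    rw [one_smul]
  have h3 : (ptMap X x ≫ g) (1 : Rᵐᵒᵖ) = g x := by
    show g ((1 : Rᵐᵒᵖ) • x) = g x
    rw [one_smul]
  rw [h2, h3] at h1
  exact h1

end EssSurjAux

end Aux

/-- **Watts's theorem as an equivalence.** The functor
`Ψ : Mod (Rᵒᵖ ⊗_ℤ S) ⥤ B(Mod R, Mod S)` induced by `B ↦ - ⊗_R B` (i.e. any functor
sending each bimodule `B` to a left adjoint of `Hom_S(B, -)` and acting on morphisms
in the induced way) is an equivalence of categories. -/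
theorem classical_watts_equivalence
    (R : Type u) [Ring R] (S : Type u) [Ring S]
    (Ψ : ModuleCat.{u} (TensorProduct ℤ Rᵐᵒᵖ S)ᵐᵒᵖ ⥤
      CategoryTheory.ObjectProperty.FullSubcategory (WattsObjZ R S))
    (adj : ∀ B, (Ψ.obj B).obj ⊣ homFunctor (bimodToLMod B))
    (hΨ : ∀ (B B' : ModuleCat.{u} (TensorProduct ℤ Rᵐᵒᵖ S)ᵐᵒᵖ) (f : B ⟶ B'),
      (Ψ.map f).hom = tensorMap (adj B) (adj B') (bimodMap f) (bimodMap_equivariant f)) :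
    Ψ.IsEquivalence := by
  refine { faithful := ?_, full := ?_, essSurj := ?_ }
  · -- faithfulness
    constructor
    intro B B' f g hfg
    replace hfg : (Ψ.map f).hom = (Ψ.map g).hom := by rw [hfg]
    rw [hΨ B B' f, hΨ B B' g] at hfg
    unfold tensorMap at hfg
    have h1 := (conjugateEquiv (adj B') (adj B)).symm.injective hfg
    have h2 := homPre_inj h1
    apply ModuleCat.hom_ext; apply LinearMap.ext; intro b
    exact ConcreteCategory.congr_hom h2 b
  · -- fullness
    constructor
    intro B B' η
    let τ := conjugateEquiv (adj B') (adj B) η.hom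
    let φ : (bimodToLMod B).X ⟶ (bimodToLMod B').X :=
      τ.app (bimodToLMod B').X (𝟙 (bimodToLMod B').X)
    have hEqv := natTrans_equivariant τ
    have hR : ∀ (x : R) (b : B), φ (inclR R S x • b)
        = inclR R S x • (show (B' : Type u) from φ b) := by
      intro x b
      exact ConcreteCategory.congr_hom (hEqv x) b
    have hS : ∀ (s : Sᵐᵒᵖ) (b : B), φ (inclS R S s • b)
        = inclS R S s • (show (B' : Type u) from φ b) := by
      intro s b
      exact φ.hom.map_smul s b
    have hlin : ∀ (z : (TensorProduct ℤ Rᵐᵒᵖ S)ᵐᵒᵖ) (b : B),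
        φ (z • b) = z • (show (B' : Type u) from φ b) := by
      intro z b
      induction z using MulOpposite.rec' with
      | h w =>
        induction w using TensorProduct.induction_on with
        | zero =>
          show φ ((0 : (TensorProduct ℤ Rᵐᵒᵖ S)ᵐᵒᵖ) • b)
            = (0 : (TensorProduct ℤ Rᵐᵒᵖ S)ᵐᵒᵖ) • (show (B' : Type u) from φ b)
          exact (congrArg φ.hom (zero_smul (TensorProduct ℤ Rᵐᵒᵖ S)ᵐᵒᵖ b)).trans
            (φ.hom.map_zero.trans (zero_smul (TensorProduct ℤ Rᵐᵒᵖ S)ᵐᵒᵖ (show (B' : Type u) from φ b)).symm)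
        | tmul x s =>
          have hkey : (op (x ⊗ₜ[ℤ] s) : (TensorProduct ℤ Rᵐᵒᵖ S)ᵐᵒᵖ)
              = inclR R S x.unop * inclS R S (op s) := by
            apply unop_injective
            show x ⊗ₜ[ℤ] s
              = ((1 : Rᵐᵒᵖ) ⊗ₜ[ℤ] s) * ((op x.unop : Rᵐᵒᵖ) ⊗ₜ[ℤ] (1 : S))
            rw [Algebra.TensorProduct.tmul_mul_tmul, one_mul, mul_one, op_unop]
          rw [hkey, mul_smul, mul_smul, hR, hS]
        | add w₁ w₂ ih₁ ih₂ =>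
          show φ ((op w₁ + op w₂) • b)
            = (op w₁ + op w₂) • (show (B' : Type u) from φ b)
          rw [add_smul, add_smul]
          erw [map_add, ih₁, ih₂]
          rfl
    let f : B ⟶ B' := ModuleCat.ofHom
      { toFun := fun b => φ b
        map_add' := φ.hom.map_add
        map_smul' := fun z b => hlin z b }
    refine ⟨f, ?_⟩
    apply ObjectProperty.hom_ext
    rw [hΨ B B' f]
    unfold tensorMap
    have hbm : bimodMap f = φ := by
      apply ModuleCat.hom_ext; apply LinearMap.ext; intro b; rfl
    have : homPre (bimodMap f) (bimodMap_equivariant f) = τ := by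
      refine (natTrans_eq_homPre τ ?_ (bimodMap_equivariant f)).symm
      rw [hbm]
    rw [this]
    exact (conjugateEquiv (adj B') (adj B)).symm_apply_apply η.hom
  · -- essential surjectivity
    constructor
    intro Tf
    obtain ⟨hadd, hfin, hcop⟩ := Tf.property
    set T := Tf.obj with hTdef
    haveI : T.Additive := hadd
    haveI : PreservesFiniteColimits T := hfin.some
    haveI : ∀ J : Type u, PreservesColimitsOfShape (Discrete J) T := fun J => (hcop J).some
    haveI : PreservesColimits T :=
      preservesColimits_of_preservesCoequalizers_and_coproducts T
    haveI : T.IsLeftAdjoint :=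
      isLeftAdjoint_of_preservesColimits_of_isSeparating isSeparating_RR T
    let adj' := Adjunction.ofIsLeftAdjoint T
    let G := T.rightAdjoint
    -- basic facts about `ptMap`
    have hat_smul : ∀ (N : ModuleCat.{u} Sᵐᵒᵖ) (r : Rᵐᵒᵖ) (g : G.obj N),
        ptMap (G.obj N) (r • g) = (mulMap R r.unop ≫ ptMap (G.obj N) g :
          (RR : ModuleCat.{u} Rᵐᵒᵖ) ⟶ G.obj N) := by
      intro N r g
      apply ModuleCat.hom_ext; apply LinearMap.ext; intro y
      show (show Rᵐᵒᵖ from y) • (r • g) = (op (r.unop * (show Rᵐᵒᵖ from y).unop) : Rᵐᵒᵖ) • g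
      rw [← mul_smul]
      rfl
    have hat_add : ∀ (N : ModuleCat.{u} Sᵐᵒᵖ) (g g' : G.obj N),
        ptMap (G.obj N) (g + g') = ptMap (G.obj N) g + ptMap (G.obj N) g' := by
      intro N g g'
      apply ModuleCat.hom_ext; apply LinearMap.ext; intro y
      show (show Rᵐᵒᵖ from y) • (g + g')
        = (show Rᵐᵒᵖ from y) • g + (show Rᵐᵒᵖ from y) • g'
      exact smul_add _ _ _
    have hat_comp : ∀ {N N' : ModuleCat.{u} Sᵐᵒᵖ} (f : N ⟶ N') (g : G.obj N),
        ptMap (G.obj N') (G.map f g) = (ptMap (G.obj N) g ≫ G.map f :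
          (RR : ModuleCat.{u} Rᵐᵒᵖ) ⟶ G.obj N') := by
      intro N N' f g
      apply ModuleCat.hom_ext; apply LinearMap.ext; intro y
      show (show Rᵐᵒᵖ from y) • (G.map f g) = G.map f ((show Rᵐᵒᵖ from y) • g)
      exact ((G.map f).hom.map_smul _ g).symm
    -- the components of the natural isomorphism `G ≅ homFunctor F`
    let θ : ∀ N : ModuleCat.{u} Sᵐᵒᵖ,
        (G.obj N) ≃ₗ[Rᵐᵒᵖ] ((homFunctor (bimodToLMod (wattsBimod T))).obj N) := fun N =>
      { toFun := fun g => (wattsIsoX T).hom ≫ (adj'.homEquiv RR N).symm (ptMap (G.obj N) g)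
        invFun := fun α => (adj'.homEquiv RR N) ((wattsIsoX T).inv ≫ α) (1 : Rᵐᵒᵖ)
        map_add' := fun g g' => by
          show (wattsIsoX T).hom ≫ (adj'.homEquiv RR N).symm (ptMap (G.obj N) (g + g'))
            = ((wattsIsoX T).hom ≫ (adj'.homEquiv RR N).symm (ptMap (G.obj N) g))
              + ((wattsIsoX T).hom ≫ (adj'.homEquiv RR N).symm (ptMap (G.obj N) g'))
          rw [hat_add, Adjunction.homEquiv_counit, Adjunction.homEquiv_counit,
            Adjunction.homEquiv_counit, T.map_add, Preadditive.add_comp,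
            Preadditive.comp_add]
        map_smul' := fun r g => by
          show (wattsIsoX T).hom ≫ (adj'.homEquiv RR N).symm (ptMap (G.obj N) (r • g))
            = (bimodToLMod (wattsBimod T)).ρ r.unop
              ≫ ((wattsIsoX T).hom ≫ (adj'.homEquiv RR N).symm (ptMap (G.obj N) g))
          rw [hat_smul, Adjunction.homEquiv_counit, Adjunction.homEquiv_counit,
            T.map_comp, ← Category.assoc, ← Category.assoc, ← wattsRho_comm,
            Category.assoc, Category.assoc]
        left_inv := fun g => by
          show (adj'.homEquiv RR N)
            ((wattsIsoX T).inv ≫ ((wattsIsoX T).hom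
              ≫ (adj'.homEquiv RR N).symm (ptMap (G.obj N) g)))
              (1 : Rᵐᵒᵖ) = g
          rw [← Category.assoc, (wattsIsoX T).inv_hom_id, Category.id_comp,
            Equiv.apply_symm_apply]
          show (1 : Rᵐᵒᵖ) • g = g
          exact one_smul _ g
        right_inv := fun α => by
          have hβ : ptMap (G.obj N)
                ((adj'.homEquiv RR N) ((wattsIsoX T).inv ≫ α) (1 : Rᵐᵒᵖ))
              = (adj'.homEquiv RR N) ((wattsIsoX T).inv ≫ α) := by
            apply ModuleCat.hom_ext; apply LinearMap.ext; intro y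
            have hy := ((adj'.homEquiv RR N) ((wattsIsoX T).inv ≫ α)).hom.map_smul
              (show Rᵐᵒᵖ from y) (1 : Rᵐᵒᵖ)
            show (show Rᵐᵒᵖ from y)
                • ((adj'.homEquiv RR N) ((wattsIsoX T).inv ≫ α) (1 : Rᵐᵒᵖ))
              = (adj'.homEquiv RR N) ((wattsIsoX T).inv ≫ α) y
            rw [← hy]
            congr 1
            show (show Rᵐᵒᵖ from y) * 1 = (show Rᵐᵒᵖ from y)
            exact mul_one _
          show (wattsIsoX T).hom ≫ (adj'.homEquiv RR N).symm
            (ptMap (G.obj N)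
              ((adj'.homEquiv RR N) ((wattsIsoX T).inv ≫ α) (1 : Rᵐᵒᵖ))) = α
          rw [hβ, Equiv.symm_apply_apply]
          exact (wattsIsoX T).hom_inv_id_assoc α }
    let θiso : G ≅ homFunctor (bimodToLMod (wattsBimod T)) :=
      NatIso.ofComponents (fun N => (θ N).toModuleIso) (by
        intro N N' f
        apply ModuleCat.hom_ext; apply LinearMap.ext; intro g
        show (wattsIsoX T).hom
            ≫ (adj'.homEquiv RR N').symm (ptMap (G.obj N') (G.map f g))
          = ((wattsIsoX T).hom ≫ (adj'.homEquiv RR N).symm (ptMap (G.obj N) g)) ≫ f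
        rw [hat_comp, Adjunction.homEquiv_naturality_right_symm, Category.assoc])
    let adjT : T ⊣ homFunctor (bimodToLMod (wattsBimod T)) := adj'.ofNatIsoRight θiso
    let isoT : (Ψ.obj (wattsBimod T)).obj ≅ T :=
      Adjunction.leftAdjointUniq (adj (wattsBimod T)) adjT
    exact ⟨wattsBimod T, ⟨ObjectProperty.isoMk _ isoT⟩⟩
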